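/- arXiv:2104.14267 — 6 statements merged into one kernel-verified Lean document; each statement's English description precedes it below -/
import Mathlib

section
/- Let J : ℝ² → ℝ be twice continuously differentiable, strictly concave on ℝ², radially unbounded (J(p) → −∞ as ‖p‖ → ∞), and attain its global maximum at p* = (z1*, z2*). Then every solution t ↦ (z1(t), z2(t), z3(t), z4(t)) of the closed-loop system that is defined for all t ≥ 0 and satisfies z3(0)² + z4(0)² = 1 converges to the source: (z1(t), z2(t)) → (z1*, z2*) as t → ∞. -/
open Real Filter

section AuxBarbalat

lemma mvt_aux (f f' : ℝ → ℝ) (a b : ℝ) (hab : a < b)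
    (hd : ∀ t ∈ Set.Icc a b, HasDerivAt f (f' t) t) :
    ∃ c ∈ Set.Ioo a b, f b - f a = f' c * (b - a) := by
  have hc : ContinuousOn f (Set.Icc a b) := fun t ht => ((hd t ht).continuousAt).continuousWithinAt
  obtain ⟨c, hc1, hc2⟩ := exists_hasDerivAt_eq_slope f f' hab hc
    (fun x hx => hd x ⟨hx.1.le, hx.2.le⟩)
  exact ⟨c, hc1, by rw [hc2, div_mul_cancel₀ _ (by linarith : b - a ≠ 0)]⟩

lemma mono_aux (f f' : ℝ → ℝ) (hd : ∀ t ∈ Set.Ici (0:ℝ), HasDerivAt f (f' t) t)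
    (hpos : ∀ t ∈ Set.Ici (0:ℝ), 0 ≤ f' t) :
    ∀ a ∈ Set.Ici (0:ℝ), ∀ b, a ≤ b → f a ≤ f b := by
  intro a ha b hab
  rcases eq_or_lt_of_le hab with rfl | h
  · exact le_refl _
  · obtain ⟨c, hc1, hc2⟩ := mvt_aux f f' a b h
      (fun t ht => hd t (le_trans ha ht.1))
    nlinarith [hpos c (le_trans ha hc1.1.le), hc1.1, hc1.2]

lemma lip_aux (f f' : ℝ → ℝ) (M : ℝ)
    (hd : ∀ t ∈ Set.Ici (0:ℝ), HasDerivAt f (f' t) t)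
    (hM : ∀ t ∈ Set.Ici (0:ℝ), |f' t| ≤ M) :
    ∀ a ∈ Set.Ici (0:ℝ), ∀ b ∈ Set.Ici (0:ℝ), |f b - f a| ≤ M * |b - a| := by
  have key : ∀ a ∈ Set.Ici (0:ℝ), ∀ b, a < b → |f b - f a| ≤ M * |b - a| := by
    intro a ha b h
    obtain ⟨c, hc1, hc2⟩ := mvt_aux f f' a b h (fun t ht => hd t (le_trans ha ht.1))
    rw [hc2, abs_mul]
    exact mul_le_mul_of_nonneg_right (hM c (le_trans ha hc1.1.le)) (abs_nonneg _)
  intro a ha b hb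
  rcases lt_trichotomy a b with h | rfl | h
  · exact key a ha b h
  · simp
  · rw [← abs_neg, neg_sub, ← abs_neg (b - a), neg_sub]
    exact key b hb a h

lemma barb1 (f φ : ℝ → ℝ) (K L : ℝ) (hK : 0 < K)
    (hd : ∀ t ∈ Set.Ici (0:ℝ), HasDerivAt φ (f t) t)
    (hf0 : ∀ t ∈ Set.Ici (0:ℝ), 0 ≤ f t)
    (hlip : ∀ a ∈ Set.Ici (0:ℝ), ∀ b ∈ Set.Ici (0:ℝ), |f b - f a| ≤ K * |b - a|)
    (hφL : ∀ t ∈ Set.Ici (0:ℝ), φ t ≤ L)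
    (hφlim : Tendsto φ atTop (nhds L)) :
    Tendsto f atTop (nhds 0) := by
  have key : ∀ t ∈ Set.Ici (0:ℝ), f t ^ 2 ≤ 4 * K * (L - φ t) := by
    intro t ht
    rcases eq_or_lt_of_le (hf0 t ht) with h0 | h0
    · have := hφL t ht; nlinarith
    · set a := f t with ha
      set d := a / (2 * K) with hdd
      have hdpos : 0 < d := by positivity
      obtain ⟨c, hc1, hc2⟩ := mvt_aux φ f t (t + d) (by linarith)
        (fun s hs => hd s (le_trans ht hs.1))
      have hcge : c ∈ Set.Ici (0:ℝ) := le_trans ht hc1.1.le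
      have hfc : a / 2 ≤ f c := by
        have := hlip t ht c hcge
        rw [abs_of_nonneg (by linarith [hc1.1] : (0:ℝ) ≤ c - t)] at this
        have habs : |f c - f t| ≤ K * (c - t) := this
        have h1 : c - t ≤ d := by linarith [hc1.2]
        have h2 : f t - f c ≤ K * d := by
          have := abs_le.1 habs
          nlinarith [this.1, hK.le, hc1.1]
        have : K * d = a / 2 := by rw [hdd]; field_simp
        linarith
      have hup : φ (t + d) ≤ L := hφL (t + d) (by simp only [Set.mem_Ici] at ht ⊢; linarith)
      have hc2' : φ (t + d) - φ t = f c * d := by rw [hc2]; ring_nf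
      have hKd : a ^ 2 = a / 2 * d * (4 * K) := by
        rw [hdd]; field_simp; ring
      have hm : a / 2 * d ≤ f c * d := mul_le_mul_of_nonneg_right hfc hdpos.le
      have hm2 : a / 2 * d * (4 * K) ≤ f c * d * (4 * K) :=
        mul_le_mul_of_nonneg_right hm (by positivity)
      have hm3 : f c * d * (4 * K) ≤ (L - φ t) * (4 * K) :=
        mul_le_mul_of_nonneg_right (by linarith) (by positivity)
      nlinarith [hKd, hm2, hm3]
  have hub : Tendsto (fun t => Real.sqrt (4 * K * (L - φ t))) atTop (nhds 0) := by
    have h1 : Tendsto (fun t => 4 * K * (L - φ t)) atTop (nhds 0) := by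
      have := (hφlim.const_sub L).const_mul (4 * K)
      simpa using this
    have := (Real.continuous_sqrt.tendsto 0).comp h1
    simpa [Function.comp_def] using this
  apply tendsto_of_tendsto_of_tendsto_of_le_of_le' tendsto_const_nhds hub
  · filter_upwards [eventually_ge_atTop (0:ℝ)] with t ht
    exact hf0 t ht
  · filter_upwards [eventually_ge_atTop (0:ℝ)] with t ht
    have h1 := key t ht
    have h2 := hf0 t ht
    calc f t = Real.sqrt (f t ^ 2) := by rw [Real.sqrt_sq h2]
    _ ≤ Real.sqrt (4 * K * (L - φ t)) := Real.sqrt_le_sqrt h1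

lemma barb2 (u W r : ℝ → ℝ) (c K : ℝ) (hc : 0 < c) (hK : 0 < K)
    (hu : Tendsto u atTop (nhds 0))
    (hr : Tendsto r atTop (nhds 0))
    (hd : ∀ t ∈ Set.Ici (0:ℝ), HasDerivAt u (r t - c * W t) t)
    (hW0 : ∀ t ∈ Set.Ici (0:ℝ), 0 ≤ W t)
    (hlip : ∀ a ∈ Set.Ici (0:ℝ), ∀ b ∈ Set.Ici (0:ℝ), |W b - W a| ≤ K * |b - a|) :
    Tendsto W atTop (nhds 0) := by
  rw [Metric.tendsto_atTop]
  intro ε hε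
  set δ := ε / (2 * K) with hδdef
  have hδpos : 0 < δ := by positivity
  have h1 : ∀ᶠ t in atTop, |r t| < c * ε / 4 := by
    have := Metric.tendsto_nhds.mp hr (c * ε / 4) (by positivity)
    simpa [Real.dist_eq] using this
  have h2 : ∀ᶠ t in atTop, |u t| < c * ε * δ / 16 := by
    have := Metric.tendsto_nhds.mp hu (c * ε * δ / 16) (by positivity)
    simpa [Real.dist_eq] using this
  obtain ⟨T, hT⟩ := eventually_atTop.1 ((h1.and h2).and (eventually_ge_atTop (0:ℝ)))
  refine ⟨T, fun t ht => ?_⟩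
  have htT := (hT t ht).2
  have hrt := (hT t ht).1.1
  have hut := (hT t ht).1.2
  rw [Real.dist_eq, sub_zero, abs_of_nonneg (hW0 t htT)]
  by_contra hcon
  push_neg at hcon
  have hWlb : ∀ s ∈ Set.Icc t (t + δ), ε / 2 ≤ W s := by
    intro s hs
    have hs0 : s ∈ Set.Ici (0:ℝ) := le_trans htT hs.1
    have hl := hlip t htT s hs0
    rw [abs_of_nonneg (by linarith [hs.1] : (0:ℝ) ≤ s - t)] at hl
    have h3 : s - t ≤ δ := by linarith [hs.2]
    have h4 : W t - W s ≤ K * δ := by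
      have := (abs_le.1 hl).1; nlinarith [hK.le, hs.1]
    have h5 : K * δ = ε / 2 := by rw [hδdef]; field_simp
    linarith
  obtain ⟨c₀, hc₀, hceq⟩ := mvt_aux u (fun s => r s - c * W s) t (t + δ) (by linarith)
    (fun s hs => hd s (le_trans htT hs.1))
  have hrc : |r c₀| < c * ε / 4 := ((hT c₀ (le_trans ht hc₀.1.le)).1).1
  have hWc : ε / 2 ≤ W c₀ := hWlb c₀ ⟨hc₀.1.le, hc₀.2.le⟩
  have huc : |u (t + δ)| < c * ε * δ / 16 := ((hT (t + δ) (by linarith)).1).2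
  have h5 : u (t + δ) - u t ≤ -(c * ε / 4) * δ := by
    rw [hceq]
    have hδeq : t + δ - t = δ := by ring
    rw [hδeq]
    have hstep : r c₀ - c * W c₀ ≤ -(c * ε / 4) := by
      have := (abs_le.1 hrc.le).2; nlinarith
    nlinarith [hδpos.le]
  have h6 := abs_le.1 hut.le
  have h7 := abs_le.1 huc.le
  have hq : 0 < c * ε * δ := by positivity
  have he : -(c * ε / 4) * δ = -(c * ε * δ) / 4 := by ring
  linarith [h5, h6.2, h7.1, hq, he]

lemma clm_apply_pair (L : ℝ × ℝ →L[ℝ] ℝ) (a b : ℝ) :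
    L (a, b) = a * L (1, 0) + b * L (0, 1) := by
  have h : ((a, b) : ℝ × ℝ) = a • ((1:ℝ), (0:ℝ)) + b • ((0:ℝ), (1:ℝ)) := by
    simp [Prod.ext_iff]
  rw [h, map_add, map_smul, map_smul, smul_eq_mul, smul_eq_mul]

lemma concave_crit_max (J : ℝ × ℝ → ℝ) (hdiff : Differentiable ℝ J)
    (hconc : ConcaveOn ℝ Set.univ J) (p : ℝ × ℝ) (h0 : fderiv ℝ J p = 0) :
    ∀ q, J q ≤ J p := by
  intro q
  set F : ℝ → ℝ := fun s => J (p + s • (q - p)) with hF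
  have hcurve : HasDerivAt (fun s : ℝ => p + s • (q - p)) (q - p) 0 := by
    have := ((hasDerivAt_id (0:ℝ)).smul_const (q - p)).const_add p
    simpa using this
  have hFd : HasDerivAt F 0 0 := by
    have hfd : HasFDerivAt J (fderiv ℝ J p) ((fun s : ℝ => p + s • (q - p)) 0) := by
      simpa using (hdiff p).hasFDerivAt
    have := hfd.comp_hasDerivAt 0 hcurve
    simpa [hF, h0, Function.comp_def] using this
  have hds : Set.Ioi (0:ℝ) \ {0} = Set.Ioi 0 := Set.diff_singleton_eq_self (by simp)
  have hslope : Tendsto (slope F 0) (nhdsWithin 0 (Set.Ioi 0)) (nhds 0) := by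
    have := hasDerivWithinAt_iff_tendsto_slope.1 (hFd.hasDerivWithinAt (s := Set.Ioi 0))
    rwa [hds] at this
  have hev : ∀ᶠ s in nhdsWithin (0:ℝ) (Set.Ioi 0), J q - J p ≤ slope F 0 s := by
    filter_upwards [Ioo_mem_nhdsGT_of_mem (by norm_num : (0:ℝ) ∈ Set.Ico (0:ℝ) 1)] with s hs
    have hconcav := hconc.2 (Set.mem_univ p) (Set.mem_univ q)
      (by linarith [hs.2] : (0:ℝ) ≤ 1 - s) hs.1.le (by ring)
    have hpt : (1 - s) • p + s • q = p + s • (q - p) := by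
      rw [sub_smul, one_smul, smul_sub]; abel
    rw [hpt, smul_eq_mul, smul_eq_mul] at hconcav
    have hF0 : F 0 = J p := by simp [hF]
    have hFs : (1 - s) * J p + s * J q ≤ F s := hconcav
    rw [slope_def_field, sub_zero, le_div_iff₀ hs.1]
    nlinarith [hFs, hF0]
  have := ge_of_tendsto hslope hev
  linarith

lemma strict_unique_max (J : ℝ × ℝ → ℝ) (hconc : StrictConcaveOn ℝ Set.univ J)
    (pstar : ℝ × ℝ) (hmax : ∀ p, J p ≤ J pstar) (p : ℝ × ℝ) (hp : J p = J pstar) :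
    p = pstar := by
  by_contra hne
  have h := hconc.2 (Set.mem_univ p) (Set.mem_univ pstar) hne
    (by norm_num : (0:ℝ) < 1/2) (by norm_num : (0:ℝ) < 1/2) (by norm_num)
  have := hmax ((1/2 : ℝ) • p + (1/2 : ℝ) • pstar)
  rw [hp] at h
  simp only [smul_eq_mul] at h
  linarith

lemma superlevel_compact (J : ℝ × ℝ → ℝ) (hcont : Continuous J)
    (hrad : Tendsto J (comap (fun p : ℝ × ℝ => ‖p‖) atTop) atBot) (c0 : ℝ) :
    IsCompact {p : ℝ × ℝ | c0 ≤ J p} := by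
  have h1 : ∀ᶠ p in comap (fun p : ℝ × ℝ => ‖p‖) atTop, J p < c0 :=
    hrad.eventually (eventually_lt_atBot c0)
  rw [eventually_comap] at h1
  obtain ⟨R, hR⟩ := eventually_atTop.1 h1
  apply Metric.isCompact_of_isClosed_isBounded
  · exact isClosed_le continuous_const hcont
  · apply Metric.isBounded_iff_subset_closedBall (0 : ℝ × ℝ) |>.2
    refine ⟨R, fun p hp => ?_⟩
    simp only [Metric.mem_closedBall, dist_zero_right]
    by_contra hc
    push_neg at hc
    exact absurd hp (not_le.2 (hR ‖p‖ (le_of_lt hc) p rfl))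

lemma prod_abs_le {a b A B : ℝ} (ha : |a| ≤ A) (hb : |b| ≤ B) : |a * b| ≤ A * B := by
  rw [abs_mul]
  exact mul_le_mul ha hb (abs_nonneg _) ((abs_nonneg a).trans ha)

lemma bound_apply (L : ℝ × ℝ →L[ℝ] ℝ) (C : ℝ) (h : ‖L‖ ≤ C) (v : ℝ × ℝ) (hv : ‖v‖ ≤ 1) :
    |L v| ≤ C := by
  have h1 := L.le_opNorm v
  rw [Real.norm_eq_abs] at h1
  nlinarith [norm_nonneg L, norm_nonneg v, L.opNorm_nonneg]

end AuxBarbalat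

/-- First component of the gradient of `J : ℝ² → ℝ`, i.e. `∂J/∂z1`. -/
noncomputable def gradJ1 (J : ℝ × ℝ → ℝ) (p : ℝ × ℝ) : ℝ := fderiv ℝ J p (1, 0)

/-- Second component of the gradient of `J : ℝ² → ℝ`, i.e. `∂J/∂z2`. -/
noncomputable def gradJ2 (J : ℝ × ℝ → ℝ) (p : ℝ × ℝ) : ℝ := fderiv ℝ J p (0, 1)

/-- The closed-loop unicycle system under the projected gradient-ascent control law:
`ż1 = k1⟨∇J,(z3,z4)⟩ z3`, `ż2 = k1⟨∇J,(z3,z4)⟩ z4`,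
`ż3 = k2⟨∇J⊥,(z3,z4)⟩ z4`, `ż4 = −k2⟨∇J⊥,(z3,z4)⟩ z3`,
where `∇J⊥ = (∂J/∂z2, −∂J/∂z1)` and the equations hold for all `t ∈ s`. -/
def ClosedLoop (J : ℝ × ℝ → ℝ) (k1 k2 : ℝ) (z1 z2 z3 z4 : ℝ → ℝ) (s : Set ℝ) : Prop :=
  ∀ t ∈ s,
    HasDerivAt z1
      (k1 * (gradJ1 J (z1 t, z2 t) * z3 t + gradJ2 J (z1 t, z2 t) * z4 t) * z3 t) t ∧
    HasDerivAt z2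
      (k1 * (gradJ1 J (z1 t, z2 t) * z3 t + gradJ2 J (z1 t, z2 t) * z4 t) * z4 t) t ∧
    HasDerivAt z3
      (k2 * (gradJ2 J (z1 t, z2 t) * z3 t - gradJ1 J (z1 t, z2 t) * z4 t) * z4 t) t ∧
    HasDerivAt z4
      (-(k2 * (gradJ2 J (z1 t, z2 t) * z3 t - gradJ1 J (z1 t, z2 t) * z4 t)) * z3 t) t

set_option maxHeartbeats 1000000 in
/-- For `J` twice continuously differentiable, strictly concave, radially
unbounded with global maximum at `pstar`, every solution of the closed-loop system defined
for all `t ≥ 0` starting on the unit circle in `(z3, z4)` converges to the source. -/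
theorem stmt0 (J : ℝ × ℝ → ℝ) (hJ : ContDiff ℝ 2 J)
    (hconc : StrictConcaveOn ℝ Set.univ J)
    (hrad : Tendsto J (comap (fun p : ℝ × ℝ => ‖p‖) atTop) atBot)
    (pstar : ℝ × ℝ) (hmax : ∀ p : ℝ × ℝ, J p ≤ J pstar)
    (k1 k2 : ℝ) (hk1 : 0 < k1) (hk2 : 0 < k2)
    (z1 z2 z3 z4 : ℝ → ℝ)
    (hsol : ClosedLoop J k1 k2 z1 z2 z3 z4 (Set.Ici 0))
    (hinit : z3 0 ^ 2 + z4 0 ^ 2 = 1) :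
    Tendsto (fun t => (z1 t, z2 t)) atTop (nhds pstar) := by
  classical
  have hJd : Differentiable ℝ J := hJ.differentiable (by norm_num)
  -- gradient components are C¹
  have hg1cd : ContDiff ℝ 1 (gradJ1 J) := by
    have h1 : ContDiff ℝ 1 (fderiv ℝ J) := hJ.fderiv_right (by norm_num)
    exact h1.clm_apply contDiff_const
  have hg2cd : ContDiff ℝ 1 (gradJ2 J) := by
    have h1 : ContDiff ℝ 1 (fderiv ℝ J) := hJ.fderiv_right (by norm_num)
    exact h1.clm_apply contDiff_const
  -- abbreviations
  set u : ℝ → ℝ := fun t => gradJ1 J (z1 t, z2 t) * z3 t + gradJ2 J (z1 t, z2 t) * z4 t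
    with hu_def
  set w : ℝ → ℝ := fun t => gradJ2 J (z1 t, z2 t) * z3 t - gradJ1 J (z1 t, z2 t) * z4 t
    with hw_def
  set q : ℝ → ℝ := fun t =>
      (fderiv ℝ (gradJ1 J) (z1 t, z2 t)) (z3 t, z4 t) * z3 t +
      (fderiv ℝ (gradJ2 J) (z1 t, z2 t)) (z3 t, z4 t) * z4 t
    with hq_def
  -- derivative of the position curve
  have hp' : ∀ t ∈ Set.Ici (0:ℝ), HasDerivAt (fun s => (z1 s, z2 s))
      (k1 * u t * z3 t, k1 * u t * z4 t) t := by
    intro t ht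
    exact ((hsol t ht).1).prodMk ((hsol t ht).2.1)
  -- unit circle invariance
  have hn1 : ∀ t ∈ Set.Ici (0:ℝ), z3 t ^ 2 + z4 t ^ 2 = 1 := by
    have hd : ∀ t ∈ Set.Ici (0:ℝ), HasDerivAt (fun s => z3 s ^ 2 + z4 s ^ 2) 0 t := by
      intro t ht
      obtain ⟨_, _, h3, h4⟩ := hsol t ht
      have := (h3.pow 2).add (h4.pow 2)
      refine this.congr_deriv ?_
      ring
    intro t ht
    have h := lip_aux (fun s => z3 s ^ 2 + z4 s ^ 2) (fun _ => 0) 0 hd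
      (fun s _ => by simp) 0 Set.self_mem_Ici t ht
    simp only [zero_mul] at h
    have h0 := abs_eq_zero.mp (le_antisymm h (abs_nonneg _))
    have : z3 t ^ 2 + z4 t ^ 2 = z3 0 ^ 2 + z4 0 ^ 2 := by linarith [sub_eq_zero.mp h0]
    rw [this, hinit]
  have habs3 : ∀ t ∈ Set.Ici (0:ℝ), |z3 t| ≤ 1 := by
    intro t ht
    have h := hn1 t ht
    rw [abs_le]; constructor <;> nlinarith [sq_nonneg (z4 t)]
  have habs4 : ∀ t ∈ Set.Ici (0:ℝ), |z4 t| ≤ 1 := by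
    intro t ht
    have h := hn1 t ht
    rw [abs_le]; constructor <;> nlinarith [sq_nonneg (z3 t)]
  have hnorm34 : ∀ t ∈ Set.Ici (0:ℝ), ‖(z3 t, z4 t)‖ ≤ 1 := by
    intro t ht
    have : ‖(z3 t, z4 t)‖ = max |z3 t| |z4 t| := by
      simp [Prod.norm_def, Real.norm_eq_abs]
    rw [this]
    exact max_le (habs3 t ht) (habs4 t ht)
  -- J along the trajectory
  have hφ' : ∀ t ∈ Set.Ici (0:ℝ), HasDerivAt (fun s => J (z1 s, z2 s)) (k1 * u t ^ 2) t := by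
    intro t ht
    have hc := (hJd (z1 t, z2 t)).hasFDerivAt.comp_hasDerivAt t (hp' t ht)
    refine hc.congr_deriv ?_
    rw [clm_apply_pair]
    simp only [hu_def, gradJ1, gradJ2]
    ring
  -- derivatives of gradient components along trajectory
  have hD1 : ∀ t ∈ Set.Ici (0:ℝ), HasDerivAt (fun s => gradJ1 J (z1 s, z2 s))
      (k1 * u t * (fderiv ℝ (gradJ1 J) (z1 t, z2 t)) (z3 t, z4 t)) t := by
    intro t ht
    have hf := (hg1cd.differentiable one_ne_zero (z1 t, z2 t)).hasFDerivAt
    have hc := hf.comp_hasDerivAt t (hp' t ht)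
    refine hc.congr_deriv ?_
    rw [clm_apply_pair _ (k1 * u t * z3 t) (k1 * u t * z4 t),
      clm_apply_pair _ (z3 t) (z4 t)]
    ring
  have hD2 : ∀ t ∈ Set.Ici (0:ℝ), HasDerivAt (fun s => gradJ2 J (z1 s, z2 s))
      (k1 * u t * (fderiv ℝ (gradJ2 J) (z1 t, z2 t)) (z3 t, z4 t)) t := by
    intro t ht
    have hf := (hg2cd.differentiable one_ne_zero (z1 t, z2 t)).hasFDerivAt
    have hc := hf.comp_hasDerivAt t (hp' t ht)
    refine hc.congr_deriv ?_
    rw [clm_apply_pair _ (k1 * u t * z3 t) (k1 * u t * z4 t),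
      clm_apply_pair _ (z3 t) (z4 t)]
    ring
  -- derivative of u
  have hu' : ∀ t ∈ Set.Ici (0:ℝ), HasDerivAt u (k1 * u t * q t - k2 * w t ^ 2) t := by
    intro t ht
    obtain ⟨_, _, h3, h4⟩ := hsol t ht
    have hA := (hD1 t ht).mul h3
    have hB := (hD2 t ht).mul h4
    have hAB := hA.add hB
    rw [hu_def]
    refine hAB.congr_deriv ?_
    simp only [hu_def, hw_def, hq_def]
    ring
  -- derivative of w
  have hw' : ∀ t ∈ Set.Ici (0:ℝ), HasDerivAt w
      (k1 * u t * ((fderiv ℝ (gradJ2 J) (z1 t, z2 t)) (z3 t, z4 t) * z3 t -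
        (fderiv ℝ (gradJ1 J) (z1 t, z2 t)) (z3 t, z4 t) * z4 t) + k2 * w t * u t) t := by
    intro t ht
    obtain ⟨_, _, h3, h4⟩ := hsol t ht
    have hA := (hD2 t ht).mul h3
    have hB := (hD1 t ht).mul h4
    have hAB := hA.sub hB
    rw [hw_def]
    refine hAB.congr_deriv ?_
    simp only [hu_def, hw_def]
    ring
  -- monotonicity of J along trajectory
  have hmono := mono_aux (fun s => J (z1 s, z2 s)) (fun t => k1 * u t ^ 2) hφ'
    (fun t _ => by positivity)
  -- compact superlevel set
  have hKcpt := superlevel_compact J hJ.continuous hrad (J (z1 0, z2 0))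
  have hmem : ∀ t ∈ Set.Ici (0:ℝ), (z1 t, z2 t) ∈ {x : ℝ × ℝ | J (z1 0, z2 0) ≤ J x} :=
    fun t ht => hmono 0 Set.self_mem_Ici t ht
  -- bounds
  obtain ⟨C1, hC1⟩ := hKcpt.exists_bound_of_continuousOn
    ((hJ.continuous_fderiv (by norm_num)).continuousOn)
  obtain ⟨C2, hC2⟩ := hKcpt.exists_bound_of_continuousOn
    ((hg1cd.continuous_fderiv one_ne_zero).continuousOn)
  obtain ⟨C3, hC3⟩ := hKcpt.exists_bound_of_continuousOn
    ((hg2cd.continuous_fderiv one_ne_zero).continuousOn)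
  have hC1n : 0 ≤ C1 := le_trans (norm_nonneg _) (hC1 _ (hmem 0 Set.self_mem_Ici))
  have hC2n : 0 ≤ C2 := le_trans (norm_nonneg _) (hC2 _ (hmem 0 Set.self_mem_Ici))
  have hC3n : 0 ≤ C3 := le_trans (norm_nonneg _) (hC3 _ (hmem 0 Set.self_mem_Ici))
  have hg1b : ∀ t ∈ Set.Ici (0:ℝ), |gradJ1 J (z1 t, z2 t)| ≤ C1 := by
    intro t ht
    exact bound_apply _ C1 (hC1 _ (hmem t ht)) ((1:ℝ), (0:ℝ))
      (by simp [Prod.norm_def])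
  have hg2b : ∀ t ∈ Set.Ici (0:ℝ), |gradJ2 J (z1 t, z2 t)| ≤ C1 := by
    intro t ht
    exact bound_apply _ C1 (hC1 _ (hmem t ht)) ((0:ℝ), (1:ℝ))
      (by simp [Prod.norm_def])
  have hA1b : ∀ t ∈ Set.Ici (0:ℝ), |(fderiv ℝ (gradJ1 J) (z1 t, z2 t)) (z3 t, z4 t)| ≤ C2 :=
    fun t ht => bound_apply _ C2 (hC2 _ (hmem t ht)) _ (hnorm34 t ht)
  have hA2b : ∀ t ∈ Set.Ici (0:ℝ), |(fderiv ℝ (gradJ2 J) (z1 t, z2 t)) (z3 t, z4 t)| ≤ C3 :=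
    fun t ht => bound_apply _ C3 (hC3 _ (hmem t ht)) _ (hnorm34 t ht)
  have hub : ∀ t ∈ Set.Ici (0:ℝ), |u t| ≤ 2 * C1 := by
    intro t ht
    simp only [hu_def]
    calc |gradJ1 J (z1 t, z2 t) * z3 t + gradJ2 J (z1 t, z2 t) * z4 t|
        ≤ |gradJ1 J (z1 t, z2 t) * z3 t| + |gradJ2 J (z1 t, z2 t) * z4 t| := abs_add_le _ _
      _ ≤ C1 * 1 + C1 * 1 := add_le_add (prod_abs_le (hg1b t ht) (habs3 t ht))
          (prod_abs_le (hg2b t ht) (habs4 t ht))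
      _ = 2 * C1 := by ring
  have hwb : ∀ t ∈ Set.Ici (0:ℝ), |w t| ≤ 2 * C1 := by
    intro t ht
    simp only [hw_def]
    calc |gradJ2 J (z1 t, z2 t) * z3 t - gradJ1 J (z1 t, z2 t) * z4 t|
        ≤ |gradJ2 J (z1 t, z2 t) * z3 t| + |gradJ1 J (z1 t, z2 t) * z4 t| := abs_sub _ _
      _ ≤ C1 * 1 + C1 * 1 := add_le_add (prod_abs_le (hg2b t ht) (habs3 t ht))
          (prod_abs_le (hg1b t ht) (habs4 t ht))
      _ = 2 * C1 := by ring
  have hqb : ∀ t ∈ Set.Ici (0:ℝ), |q t| ≤ C2 + C3 := by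
    intro t ht
    simp only [hq_def]
    calc |(fderiv ℝ (gradJ1 J) (z1 t, z2 t)) (z3 t, z4 t) * z3 t +
          (fderiv ℝ (gradJ2 J) (z1 t, z2 t)) (z3 t, z4 t) * z4 t|
        ≤ |(fderiv ℝ (gradJ1 J) (z1 t, z2 t)) (z3 t, z4 t) * z3 t| +
          |(fderiv ℝ (gradJ2 J) (z1 t, z2 t)) (z3 t, z4 t) * z4 t| := abs_add_le _ _
      _ ≤ C2 * 1 + C3 * 1 := add_le_add (prod_abs_le (hA1b t ht) (habs3 t ht))
          (prod_abs_le (hA2b t ht) (habs4 t ht))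
      _ = C2 + C3 := by ring
  -- bound on u'
  set Mu : ℝ := k1 * (2 * C1) * (C2 + C3) + k2 * (2 * C1) ^ 2 with hMu_def
  have hMun : 0 ≤ Mu := by positivity
  have hu'b : ∀ t ∈ Set.Ici (0:ℝ), |k1 * u t * q t - k2 * w t ^ 2| ≤ Mu := by
    intro t ht
    calc |k1 * u t * q t - k2 * w t ^ 2|
        ≤ |k1 * u t * q t| + |k2 * w t ^ 2| := abs_sub _ _
      _ ≤ k1 * (2 * C1) * (C2 + C3) + k2 * (2 * C1) ^ 2 := by
          have e1 : |k1 * u t * q t| = k1 * |u t| * |q t| := by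
            rw [abs_mul, abs_mul, abs_of_pos hk1]
          have e2 : |k2 * w t ^ 2| = k2 * |w t| ^ 2 := by
            rw [abs_mul, abs_of_pos hk2, abs_pow, sq_abs, ← sq_abs]
          rw [e1, e2]
          have h1 := hub t ht; have h2 := hqb t ht; have h3 := hwb t ht
          have h4 := abs_nonneg (u t); have h5 := abs_nonneg (q t)
          have h6 := abs_nonneg (w t)
          nlinarith [mul_le_mul h1 h2 h5 (by linarith : (0:ℝ) ≤ 2 * C1),
            mul_le_mul h3 h3 h6 (by linarith : (0:ℝ) ≤ 2 * C1)]
      _ = Mu := by rw [hMu_def]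
  -- limit of J along trajectory
  have hψmono : Monotone (fun t => J (z1 (max t 0), z2 (max t 0))) := fun a b hab =>
    hmono (max a 0) (le_max_right a 0) (max b 0) (max_le_max hab le_rfl)
  have hbdd : BddAbove (Set.range fun t => J (z1 (max t 0), z2 (max t 0))) := by
    refine ⟨J pstar, ?_⟩
    rintro y ⟨t, rfl⟩
    exact hmax _
  have hψlim := tendsto_atTop_ciSup hψmono hbdd
  set L : ℝ := ⨆ t : ℝ, J (z1 (max t 0), z2 (max t 0)) with hL_def
  have hφlim : Tendsto (fun s => J (z1 s, z2 s)) atTop (nhds L) := by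
    apply hψlim.congr'
    filter_upwards [eventually_ge_atTop (0:ℝ)] with t ht
    rw [max_eq_left ht]
  have hφL : ∀ t ∈ Set.Ici (0:ℝ), J (z1 t, z2 t) ≤ L := by
    intro t ht
    have h : J (z1 t, z2 t) = J (z1 (max t 0), z2 (max t 0)) := by rw [max_eq_left ht]
    rw [h]
    exact le_ciSup hbdd t
  -- Barbalat I : k1 u² → 0
  set Kf : ℝ := k1 * (2 * (2 * C1) * Mu) + 1 with hKf_def
  have hKfpos : 0 < Kf := by positivity
  have hf'lip : ∀ a ∈ Set.Ici (0:ℝ), ∀ b ∈ Set.Ici (0:ℝ),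
      |k1 * u b ^ 2 - k1 * u a ^ 2| ≤ Kf * |b - a| := by
    have hder : ∀ t ∈ Set.Ici (0:ℝ), HasDerivAt (fun s => k1 * u s ^ 2)
        (k1 * (2 * u t ^ 1 * (k1 * u t * q t - k2 * w t ^ 2))) t :=
      fun t ht => ((hu' t ht).pow 2).const_mul k1
    have hbound : ∀ t ∈ Set.Ici (0:ℝ),
        |k1 * (2 * u t ^ 1 * (k1 * u t * q t - k2 * w t ^ 2))| ≤ k1 * (2 * (2 * C1) * Mu) := by
      intro t ht
      rw [abs_mul, abs_of_pos hk1, pow_one]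
      have h1 : |2 * u t * (k1 * u t * q t - k2 * w t ^ 2)| ≤ 2 * (2 * C1) * Mu := by
        have e : |2 * u t * (k1 * u t * q t - k2 * w t ^ 2)| =
            2 * |u t| * |k1 * u t * q t - k2 * w t ^ 2| := by
          rw [abs_mul, abs_mul]; norm_num
        rw [e]
        have h2 := hub t ht; have h3 := hu'b t ht
        have h4 := abs_nonneg (u t)
        have h5 := abs_nonneg (k1 * u t * q t - k2 * w t ^ 2)
        nlinarith
      nlinarith [h1, hk1.le]
    intro a ha b hb
    have := lip_aux (fun s => k1 * u s ^ 2)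
      (fun t => k1 * (2 * u t ^ 1 * (k1 * u t * q t - k2 * w t ^ 2)))
      (k1 * (2 * (2 * C1) * Mu)) hder hbound a ha b hb
    have h7 : (0:ℝ) ≤ |b - a| := abs_nonneg _
    calc |k1 * u b ^ 2 - k1 * u a ^ 2| ≤ k1 * (2 * (2 * C1) * Mu) * |b - a| := this
      _ ≤ Kf * |b - a| := by rw [hKf_def]; nlinarith
  have hfsq : Tendsto (fun t => k1 * u t ^ 2) atTop (nhds 0) := by
    apply barb1 (fun t => k1 * u t ^ 2) (fun s => J (z1 s, z2 s)) Kf L hKfpos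
      hφ' (fun t _ => by positivity) hf'lip hφL hφlim
  -- u → 0
  have husq : Tendsto (fun t => u t ^ 2) atTop (nhds 0) := by
    have h := hfsq.const_mul k1⁻¹
    simp only [mul_zero] at h
    apply h.congr
    intro t
    field_simp
  have habsu : Tendsto (fun t => |u t|) atTop (nhds 0) := by
    have heq : (fun t => |u t|) = (fun x => Real.sqrt x) ∘ (fun t => u t ^ 2) := by
      funext t
      exact (Real.sqrt_sq_eq_abs (u t)).symm
    rw [heq]
    simpa using (Real.continuous_sqrt.tendsto 0).comp husq
  have hu0 : Tendsto u atTop (nhds 0) := by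
    have hneg : Tendsto (fun t => -|u t|) atTop (nhds 0) := by
      have := habsu.neg; simpa using this
    exact tendsto_of_tendsto_of_tendsto_of_le_of_le hneg habsu
      (fun t => neg_abs_le (u t)) (fun t => le_abs_self (u t))
  -- r := k1 u q → 0
  have hr0 : Tendsto (fun t => k1 * u t * q t) atTop (nhds 0) := by
    have hgl : Tendsto (fun t => k1 * (C2 + C3) * |u t|) atTop (nhds 0) := by
      have := habsu.const_mul (k1 * (C2 + C3))
      simpa using this
    apply squeeze_zero_norm' _ hgl
    filter_upwards [eventually_ge_atTop (0:ℝ)] with t ht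
    have h1 := hqb t ht
    have h2 := abs_nonneg (u t)
    have h3 := abs_nonneg (q t)
    rw [Real.norm_eq_abs, abs_mul, abs_mul, abs_of_pos hk1]
    have h4 : k1 * (|u t| * |q t|) ≤ k1 * (|u t| * (C2 + C3)) :=
      mul_le_mul_of_nonneg_left (mul_le_mul_of_nonneg_left h1 h2) hk1.le
    nlinarith [h4]
  -- Lipschitz bound for w²
  set Mw : ℝ := k1 * (2 * C1) * (C2 + C3) + k2 * (2 * C1) * (2 * C1) with hMw_def
  have hw'b : ∀ t ∈ Set.Ici (0:ℝ),
      |k1 * u t * ((fderiv ℝ (gradJ2 J) (z1 t, z2 t)) (z3 t, z4 t) * z3 t -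
        (fderiv ℝ (gradJ1 J) (z1 t, z2 t)) (z3 t, z4 t) * z4 t) + k2 * w t * u t| ≤ Mw := by
    intro t ht
    have h1 := hub t ht; have h2 := hwb t ht
    have hA1 := hA1b t ht; have hA2 := hA2b t ht
    have h33 := habs3 t ht; have h44 := habs4 t ht
    have e1 : |(fderiv ℝ (gradJ2 J) (z1 t, z2 t)) (z3 t, z4 t) * z3 t -
        (fderiv ℝ (gradJ1 J) (z1 t, z2 t)) (z3 t, z4 t) * z4 t| ≤ C3 + C2 := by
      calc _ ≤ |(fderiv ℝ (gradJ2 J) (z1 t, z2 t)) (z3 t, z4 t) * z3 t| +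
            |(fderiv ℝ (gradJ1 J) (z1 t, z2 t)) (z3 t, z4 t) * z4 t| := abs_sub _ _
        _ ≤ C3 * 1 + C2 * 1 := add_le_add (prod_abs_le hA2 h33) (prod_abs_le hA1 h44)
        _ = C3 + C2 := by ring
    calc |k1 * u t * ((fderiv ℝ (gradJ2 J) (z1 t, z2 t)) (z3 t, z4 t) * z3 t -
          (fderiv ℝ (gradJ1 J) (z1 t, z2 t)) (z3 t, z4 t) * z4 t) + k2 * w t * u t|
        ≤ |k1 * u t * ((fderiv ℝ (gradJ2 J) (z1 t, z2 t)) (z3 t, z4 t) * z3 t -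
          (fderiv ℝ (gradJ1 J) (z1 t, z2 t)) (z3 t, z4 t) * z4 t)| + |k2 * w t * u t| :=
          abs_add_le _ _
      _ ≤ Mw := by
          rw [hMw_def]
          have e2 : |k1 * u t * ((fderiv ℝ (gradJ2 J) (z1 t, z2 t)) (z3 t, z4 t) * z3 t -
              (fderiv ℝ (gradJ1 J) (z1 t, z2 t)) (z3 t, z4 t) * z4 t)| =
              k1 * |u t| * |(fderiv ℝ (gradJ2 J) (z1 t, z2 t)) (z3 t, z4 t) * z3 t -
              (fderiv ℝ (gradJ1 J) (z1 t, z2 t)) (z3 t, z4 t) * z4 t| := by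
            rw [abs_mul, abs_mul, abs_of_pos hk1]
          have e3 : |k2 * w t * u t| = k2 * |w t| * |u t| := by
            rw [abs_mul, abs_mul, abs_of_pos hk2]
          rw [e2, e3]
          have h4 := abs_nonneg (u t); have h5 := abs_nonneg (w t)
          have h6 := abs_nonneg ((fderiv ℝ (gradJ2 J) (z1 t, z2 t)) (z3 t, z4 t) * z3 t -
            (fderiv ℝ (gradJ1 J) (z1 t, z2 t)) (z3 t, z4 t) * z4 t)
          nlinarith [mul_le_mul h1 e1 h6 (by linarith : (0:ℝ) ≤ 2 * C1),
            mul_le_mul h2 h1 h4 (by linarith : (0:ℝ) ≤ 2 * C1)]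
  set Kw : ℝ := 2 * (2 * C1) * Mw + 1 with hKw_def
  have hMwn : 0 ≤ Mw := by positivity
  have hKwpos : 0 < Kw := by positivity
  have hWlip : ∀ a ∈ Set.Ici (0:ℝ), ∀ b ∈ Set.Ici (0:ℝ),
      |w b ^ 2 - w a ^ 2| ≤ Kw * |b - a| := by
    have hder : ∀ t ∈ Set.Ici (0:ℝ), HasDerivAt (fun s => w s ^ 2)
        (2 * w t ^ 1 * (k1 * u t * ((fderiv ℝ (gradJ2 J) (z1 t, z2 t)) (z3 t, z4 t) * z3 t -
          (fderiv ℝ (gradJ1 J) (z1 t, z2 t)) (z3 t, z4 t) * z4 t) + k2 * w t * u t)) t :=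
      fun t ht => (hw' t ht).pow 2
    have hbound : ∀ t ∈ Set.Ici (0:ℝ),
        |2 * w t ^ 1 * (k1 * u t * ((fderiv ℝ (gradJ2 J) (z1 t, z2 t)) (z3 t, z4 t) * z3 t -
          (fderiv ℝ (gradJ1 J) (z1 t, z2 t)) (z3 t, z4 t) * z4 t) + k2 * w t * u t)| ≤
          2 * (2 * C1) * Mw := by
      intro t ht
      rw [pow_one, abs_mul, abs_mul]
      have h2 := hwb t ht; have h3 := hw'b t ht
      have h4 := abs_nonneg (w t)
      have h5 := abs_nonneg (k1 * u t * ((fderiv ℝ (gradJ2 J) (z1 t, z2 t)) (z3 t, z4 t) * z3 t -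
        (fderiv ℝ (gradJ1 J) (z1 t, z2 t)) (z3 t, z4 t) * z4 t) + k2 * w t * u t)
      have e : |(2:ℝ)| = 2 := by norm_num
      rw [e]
      nlinarith
    intro a ha b hb
    have := lip_aux (fun s => w s ^ 2) _ (2 * (2 * C1) * Mw) hder hbound a ha b hb
    have h7 : (0:ℝ) ≤ |b - a| := abs_nonneg _
    calc |w b ^ 2 - w a ^ 2| ≤ 2 * (2 * C1) * Mw * |b - a| := this
      _ ≤ Kw * |b - a| := by rw [hKw_def]; nlinarith
  -- Barbalat II : w² → 0
  have hW0 : Tendsto (fun t => w t ^ 2) atTop (nhds 0) := by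
    apply barb2 u (fun t => w t ^ 2) (fun t => k1 * u t * q t) k2 Kw hk2 hKwpos hu0 hr0
      (fun t ht => hu' t ht) (fun t _ => sq_nonneg _) hWlip
  -- gradient norm squared → 0 along trajectory
  have hG : Tendsto (fun t => gradJ1 J (z1 t, z2 t) ^ 2 + gradJ2 J (z1 t, z2 t) ^ 2)
      atTop (nhds 0) := by
    have hsum := husq.add hW0
    rw [add_zero] at hsum
    apply hsum.congr'
    filter_upwards [eventually_ge_atTop (0:ℝ)] with t ht
    have hnn := hn1 t ht
    simp only [hu_def, hw_def]
    linear_combination (gradJ1 J (z1 t, z2 t) ^ 2 + gradJ2 J (z1 t, z2 t) ^ 2) * hnn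
  -- conclusion
  rw [Metric.tendsto_atTop]
  intro ε hε
  set S : Set (ℝ × ℝ) := {x : ℝ × ℝ | J (z1 0, z2 0) ≤ J x} ∩ {x | ε ≤ dist x pstar}
    with hS_def
  have hScpt : IsCompact S := hKcpt.inter_right
    (isClosed_le continuous_const (continuous_id.dist continuous_const))
  rcases Set.eq_empty_or_nonempty S with hSe | hSne
  · refine ⟨0, fun t ht => ?_⟩
    by_contra hc
    push_neg at hc
    have : (z1 t, z2 t) ∈ S := ⟨hmem t ht, hc⟩
    rw [hSe] at this
    exact this
  · have hGcont : Continuous (fun x : ℝ × ℝ => gradJ1 J x ^ 2 + gradJ2 J x ^ 2) :=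
      ((hg1cd.continuous.pow 2).add (hg2cd.continuous.pow 2))
    obtain ⟨x0, hx0S, hx0min⟩ := hScpt.exists_isMinOn hSne hGcont.continuousOn
    rw [isMinOn_iff] at hx0min
    have hm : 0 < gradJ1 J x0 ^ 2 + gradJ2 J x0 ^ 2 := by
      rcases eq_or_lt_of_le (by positivity : (0:ℝ) ≤ gradJ1 J x0 ^ 2 + gradJ2 J x0 ^ 2)
        with h0 | h0
      · exfalso
        have hz1 : gradJ1 J x0 = 0 := by nlinarith [sq_nonneg (gradJ1 J x0), sq_nonneg (gradJ2 J x0)]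
        have hz2 : gradJ2 J x0 = 0 := by nlinarith [sq_nonneg (gradJ1 J x0), sq_nonneg (gradJ2 J x0)]
        have hfz : fderiv ℝ J x0 = 0 := by
          apply ContinuousLinearMap.ext
          rintro ⟨a, b⟩
          rw [clm_apply_pair]
          have e1 : (fderiv ℝ J x0) (1, 0) = 0 := hz1
          have e2 : (fderiv ℝ J x0) (0, 1) = 0 := hz2
          rw [e1, e2]
          norm_num
        have hcrit := concave_crit_max J hJd hconc.concaveOn x0 hfz
        have heq : J x0 = J pstar := le_antisymm (hmax x0) (hcrit pstar)
        have := strict_unique_max J hconc pstar hmax x0 heq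
        have hdist : ε ≤ dist x0 pstar := hx0S.2
        rw [this, dist_self] at hdist
        linarith
      · exact h0
    have hev : ∀ᶠ t in atTop,
        gradJ1 J (z1 t, z2 t) ^ 2 + gradJ2 J (z1 t, z2 t) ^ 2 < gradJ1 J x0 ^ 2 + gradJ2 J x0 ^ 2 :=
      hG.eventually_lt_const hm
    obtain ⟨N, hN⟩ := eventually_atTop.1 (hev.and (eventually_ge_atTop (0:ℝ)))
    refine ⟨N, fun t ht => ?_⟩
    have h := hN t ht
    by_contra hc
    push_neg at hc
    have hmemS : (z1 t, z2 t) ∈ S := ⟨hmem t h.2, hc⟩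
    exact absurd (hx0min _ hmemS) (not_le.2 h.1)
end

section
/- Let J : ℝ² → ℝ be twice continuously differentiable with global maximum at p* = (z1*, z2*), and define V(z1, z2, z3, z4) = −J(z1, z2) + ½ z3² + ½ z4² + J(z1*, z2*). Then along any differentiable solution t ↦ (z1(t), z2(t), z3(t), z4(t)) of the closed-loop system, the function t ↦ V(z1(t), z2(t), z3(t), z4(t)) is differentiable with derivative d/dt V = −k1 ⟨∇J(z1(t), z2(t)), (z3(t), z4(t))⟩², which is ≤ 0 for all t. -/
open Real Filter

/-- Along any differentiable solution of the closed-loop system, the Lyapunov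
function `V = −J(z1,z2) + ½z3² + ½z4² + J(pstar)` is differentiable in `t` with derivative
`−k1⟨∇J(z1,z2),(z3,z4)⟩² ≤ 0`. -/
theorem stmt1 (J : ℝ × ℝ → ℝ) (hJ : ContDiff ℝ 2 J)
    (pstar : ℝ × ℝ) (hmax : ∀ p : ℝ × ℝ, J p ≤ J pstar)
    (k1 k2 : ℝ) (hk1 : 0 < k1) (hk2 : 0 < k2)
    (z1 z2 z3 z4 : ℝ → ℝ)
    (hsol : ClosedLoop J k1 k2 z1 z2 z3 z4 Set.univ) :
    ∀ t : ℝ,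
      HasDerivAt
        (fun s => -J (z1 s, z2 s) + (z3 s) ^ 2 / 2 + (z4 s) ^ 2 / 2 + J pstar)
        (-(k1 * (gradJ1 J (z1 t, z2 t) * z3 t + gradJ2 J (z1 t, z2 t) * z4 t) ^ 2)) t ∧
      -(k1 * (gradJ1 J (z1 t, z2 t) * z3 t + gradJ2 J (z1 t, z2 t) * z4 t) ^ 2) ≤ 0 := by
  intro t
  obtain ⟨h1, h2, h3, h4⟩ := hsol t (Set.mem_univ t)
  set p := (z1 t, z2 t)
  set G1 := gradJ1 J p
  set G2 := gradJ2 J p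
  set u := k1 * (G1 * z3 t + G2 * z4 t)
  set w := k2 * (G2 * z3 t - G1 * z4 t)
  have hJd : HasFDerivAt J (fderiv ℝ J p) p :=
    (hJ.differentiable (by norm_num)).differentiableAt.hasFDerivAt
  have hpair : HasDerivAt (fun s => (z1 s, z2 s)) (u * z3 t, u * z4 t) t := h1.prodMk h2
  have hcomp : HasDerivAt (fun s => J (z1 s, z2 s))
      (fderiv ℝ J p (u * z3 t, u * z4 t)) t := hJd.comp_hasDerivAt t hpair
  have hlin : fderiv ℝ J p (u * z3 t, u * z4 t) = (u * z3 t) * G1 + (u * z4 t) * G2 := by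
    have : (u * z3 t, u * z4 t) = (u * z3 t) • ((1:ℝ), (0:ℝ)) + (u * z4 t) • ((0:ℝ), (1:ℝ)) := by
      simp [Prod.ext_iff]
    rw [this, map_add, map_smul, map_smul]
    simp [G1, G2, gradJ1, gradJ2, smul_eq_mul]
  rw [hlin] at hcomp
  have h3' : HasDerivAt (fun s => (z3 s) ^ 2 / 2) (z3 t * (w * z4 t)) t := by
    have := (h3.fun_pow 2).div_const 2
    refine this.congr_deriv ?_; ring
  have h4' : HasDerivAt (fun s => (z4 s) ^ 2 / 2) (z4 t * (-w * z3 t)) t := by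
    have := (h4.fun_pow 2).div_const 2
    refine this.congr_deriv ?_; ring
  have hV := ((hcomp.neg.add h3').add h4').add_const (J pstar)
  constructor
  · refine hV.congr_deriv ?_
    simp only [u]
    ring
  · have : 0 ≤ k1 * (G1 * z3 t + G2 * z4 t) ^ 2 :=
      mul_nonneg hk1.le (sq_nonneg _)
    linarith
end

section
/- Let J : ℝ² → ℝ be twice continuously differentiable, radially unbounded (J(p) → −∞ as ‖p‖ → ∞) and bounded above. Then every solution t ↦ (z1(t), z2(t), z3(t), z4(t)) of the closed-loop system defined on [0, ∞) has bounded range; in particular t ↦ (z1(t), z2(t)) remains in a compact subset of ℝ² for all t ≥ 0. -/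
open Real Filter

/-- For `J` twice continuously differentiable, radially unbounded and bounded
above, every solution of the closed-loop system on `[0,∞)` has bounded range; in particular
`(z1, z2)` stays in a compact subset of `ℝ²` for all `t ≥ 0`. -/
theorem stmt2 (J : ℝ × ℝ → ℝ) (hJ : ContDiff ℝ 2 J)
    (hrad : Tendsto J (comap (fun p : ℝ × ℝ => ‖p‖) atTop) atBot)
    (hbdd : ∃ B : ℝ, ∀ p : ℝ × ℝ, J p ≤ B)
    (k1 k2 : ℝ) (hk1 : 0 < k1) (hk2 : 0 < k2)
    (z1 z2 z3 z4 : ℝ → ℝ)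
    (hsol : ClosedLoop J k1 k2 z1 z2 z3 z4 (Set.Ici 0)) :
    (∃ C : ℝ, ∀ t ≥ (0 : ℝ), ‖(z1 t, z2 t, z3 t, z4 t)‖ ≤ C) ∧
      ∃ K : Set (ℝ × ℝ), IsCompact K ∧ ∀ t ≥ (0 : ℝ), (z1 t, z2 t) ∈ K := by
  have hJd : Differentiable ℝ J := hJ.differentiable (by norm_num)
  set g : ℝ → ℝ := fun t => J (z1 t, z2 t) with hg
  set u : ℝ → ℝ := fun t => gradJ1 J (z1 t, z2 t) * z3 t + gradJ2 J (z1 t, z2 t) * z4 t with hu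
  -- derivative of g
  have hgd : ∀ t ∈ Set.Ici (0:ℝ), HasDerivAt g (k1 * (u t)^2) t := by
    intro t ht
    obtain ⟨h1, h2, h3, h4⟩ := hsol t ht
    have hp : HasDerivAt (fun t => (z1 t, z2 t))
        (k1 * u t * z3 t, k1 * u t * z4 t) t := h1.prodMk h2
    have hF : HasFDerivAt J (fderiv ℝ J (z1 t, z2 t)) (z1 t, z2 t) := (hJd _).hasFDerivAt
    have hc := hF.comp_hasDerivAt t hp
    convert hc using 1
    iterate 3 rfl
    have he : (k1 * u t * z3 t, k1 * u t * z4 t)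
        = (k1 * u t * z3 t) • ((1:ℝ), (0:ℝ)) + (k1 * u t * z4 t) • ((0:ℝ), (1:ℝ)) := by
      simp [Prod.ext_iff]
    rw [he, map_add, map_smul, map_smul, smul_eq_mul, smul_eq_mul]
    show k1 * (u t)^2 = _ * gradJ1 J (z1 t, z2 t) + _ * gradJ2 J (z1 t, z2 t)
    simp only [hu]; ring
  -- g is monotone on Ici 0
  have hgmono : MonotoneOn g (Set.Ici 0) := by
    apply monotoneOn_of_deriv_nonneg (convex_Ici 0)
    · intro t ht; exact (hgd t ht).continuousAt.continuousWithinAt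
    · intro t ht
      rw [interior_Ici] at ht
      exact ((hgd t (Set.mem_Ici.mpr (le_of_lt (Set.mem_Ioi.mp ht)))).differentiableAt).differentiableWithinAt
    · intro t ht
      rw [interior_Ici] at ht
      rw [(hgd t (Set.mem_Ici.mpr (le_of_lt (Set.mem_Ioi.mp ht)))).deriv]
      positivity
  set c : ℝ := J (z1 0, z2 0) with hc
  have hJge : ∀ t ≥ (0:ℝ), c ≤ J (z1 t, z2 t) := fun t ht =>
    hgmono Set.self_mem_Ici ht ht
  -- radial unboundedness gives R
  have hE : ∀ᶠ p in comap (fun p : ℝ × ℝ => ‖p‖) atTop, J p < c :=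
    hrad.eventually (eventually_lt_atBot c)
  rw [eventually_comap] at hE
  obtain ⟨R, hR⟩ := eventually_atTop.mp hE
  have hnorm : ∀ t ≥ (0:ℝ), ‖(z1 t, z2 t)‖ ≤ R := by
    intro t ht
    by_contra h
    push_neg at h
    exact absurd (hR ‖(z1 t, z2 t)‖ h.le _ rfl) (not_lt.mpr (hJge t ht))
  -- z3² + z4² is constant (nonincreasing suffices)
  set h : ℝ → ℝ := fun t => (z3 t)^2 + (z4 t)^2 with hh
  have hhd : ∀ t ∈ Set.Ici (0:ℝ), HasDerivAt h 0 t := by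
    intro t ht
    obtain ⟨h1, h2, h3, h4⟩ := hsol t ht
    have := ((h3.fun_pow 2).add (h4.fun_pow 2))
    convert this using 1
    iterate 3 rfl
    ring
  have hanti : AntitoneOn h (Set.Ici 0) := by
    apply antitoneOn_of_deriv_nonpos (convex_Ici 0)
    · intro t ht; exact (hhd t ht).continuousAt.continuousWithinAt
    · intro t ht
      rw [interior_Ici] at ht
      exact ((hhd t (Set.mem_Ici.mpr (le_of_lt (Set.mem_Ioi.mp ht)))).differentiableAt).differentiableWithinAt
    · intro t ht
      rw [interior_Ici] at ht
      rw [(hhd t (Set.mem_Ici.mpr (le_of_lt (Set.mem_Ioi.mp ht)))).deriv]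
  have hhle : ∀ t ≥ (0:ℝ), h t ≤ h 0 := fun t ht =>
    hanti Set.self_mem_Ici ht ht
  have habs : ∀ x : ℝ, x^2 ≤ h 0 → |x| ≤ max 1 (h 0) := by
    intro x hx
    rcases le_or_gt (|x|) 1 with h1 | h1
    · exact h1.trans (le_max_left _ _)
    · have : |x| ≤ x^2 := by nlinarith [abs_nonneg x, sq_abs x]
      exact this.trans (hx.trans (le_max_right _ _))
  have hz34 : ∀ t ≥ (0:ℝ), |z3 t| ≤ max 1 (h 0) ∧ |z4 t| ≤ max 1 (h 0) := by
    intro t ht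
    have hle := hhle t ht
    simp only [hh] at hle
    constructor
    · exact habs _ (by simp only [hh]; nlinarith [sq_nonneg (z4 t)])
    · exact habs _ (by simp only [hh]; nlinarith [sq_nonneg (z3 t)])
  refine ⟨⟨max R (max 1 (h 0)), ?_⟩, Metric.closedBall 0 R, isCompact_closedBall 0 R, ?_⟩
  · intro t ht
    have h12 := hnorm t ht
    rw [Prod.norm_def] at h12
    obtain ⟨h3, h4⟩ := hz34 t ht
    simp only [Prod.norm_def, Real.norm_eq_abs]
    have a1 : |z1 t| ≤ R := (le_max_left _ _).trans h12
    have a2 : |z2 t| ≤ R := (le_max_right _ _).trans h12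
    simp only [max_le_iff]
    exact ⟨a1.trans (le_max_left _ _), a2.trans (le_max_left _ _),
      h3.trans (le_max_right _ _), h4.trans (le_max_right _ _)⟩
  · intro t ht
    simpa [Metric.mem_closedBall] using hnorm t ht
end

section
/- Let J : ℝ² → ℝ be twice continuously differentiable with Hessian ∇²J. Along any differentiable solution t ↦ (z1(t), z2(t), z3(t), z4(t)) of the closed-loop system, the function S(t) = ⟨∇J(z1(t), z2(t)), (z3(t), z4(t))⟩ is differentiable and satisfies dS/dt = k1 S(t) · (z3(t), z4(t))ᵀ ∇²J(z1(t), z2(t)) (z3(t), z4(t)) + k2 ⟨∇J(z1(t), z2(t)), (z4(t), −z3(t))⟩ · ⟨∇J⊥(z1(t), z2(t)), (z3(t), z4(t))⟩. -/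
open Real Filter

/-- The quadratic form of the Hessian of `J` at `p` evaluated at `(v, v)`. -/
noncomputable def hessQuad (J : ℝ × ℝ → ℝ) (p v : ℝ × ℝ) : ℝ :=
  fderiv ℝ (fun q => fderiv ℝ J q) p v v

/-- Along any differentiable solution of the closed-loop system,
`S(t) = ⟨∇J(z1,z2),(z3,z4)⟩` is differentiable with
`dS/dt = k1 S (z3,z4)ᵀ∇²J(z3,z4) + k2⟨∇J,(z4,−z3)⟩⟨∇J⊥,(z3,z4)⟩`. -/
theorem stmt5 (J : ℝ × ℝ → ℝ) (hJ : ContDiff ℝ 2 J)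
    (k1 k2 : ℝ) (hk1 : 0 < k1) (hk2 : 0 < k2)
    (z1 z2 z3 z4 : ℝ → ℝ)
    (hsol : ClosedLoop J k1 k2 z1 z2 z3 z4 Set.univ) :
    ∀ t : ℝ,
      HasDerivAt
        (fun s => gradJ1 J (z1 s, z2 s) * z3 s + gradJ2 J (z1 s, z2 s) * z4 s)
        (k1 * (gradJ1 J (z1 t, z2 t) * z3 t + gradJ2 J (z1 t, z2 t) * z4 t) *
            hessQuad J (z1 t, z2 t) (z3 t, z4 t) +
          k2 * (gradJ1 J (z1 t, z2 t) * z4 t + gradJ2 J (z1 t, z2 t) * (-z3 t)) *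
            (gradJ2 J (z1 t, z2 t) * z3 t - gradJ1 J (z1 t, z2 t) * z4 t)) t := by

  intro t
  obtain ⟨h1, h2, h3, h4⟩ := hsol t (Set.mem_univ t)
  have hF : ContDiff ℝ 1 (fderiv ℝ J) := hJ.fderiv_right (by norm_num)
  set S : ℝ := gradJ1 J (z1 t, z2 t) * z3 t + gradJ2 J (z1 t, z2 t) * z4 t with hS
  have hc : HasDerivAt (fun s => (z1 s, z2 s))
      (k1 * S * z3 t, k1 * S * z4 t) t := h1.prodMk h2
  set H := fderiv ℝ (fderiv ℝ J) (z1 t, z2 t) with hH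
  have hFd : HasFDerivAt (fderiv ℝ J) H (z1 t, z2 t) :=
    (hF.differentiable one_ne_zero (z1 t, z2 t)).hasFDerivAt
  have hcomp : HasDerivAt (fun s => fderiv ℝ J (z1 s, z2 s))
      (H (k1 * S * z3 t, k1 * S * z4 t)) t := hFd.comp_hasDerivAt t hc
  have hA : HasDerivAt (fun s => gradJ1 J (z1 s, z2 s))
      (H (k1 * S * z3 t, k1 * S * z4 t) (1, 0)) t := by
    have := hcomp.clm_apply (hasDerivAt_const t ((1:ℝ), (0:ℝ)))
    simpa [gradJ1] using this
  have hB : HasDerivAt (fun s => gradJ2 J (z1 s, z2 s))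
      (H (k1 * S * z3 t, k1 * S * z4 t) (0, 1)) t := by
    have := hcomp.clm_apply (hasDerivAt_const t ((0:ℝ), (1:ℝ)))
    simpa [gradJ2] using this
  have hsum := (hA.mul h3).add (hB.mul h4)
  refine hsum.congr_deriv ?_
  have hsmul : ((k1 * S * z3 t, k1 * S * z4 t) : ℝ × ℝ) = (k1 * S) • (z3 t, z4 t) := by
    simp [Prod.smul_mk, mul_assoc]
  have hv : ((z3 t, z4 t) : ℝ × ℝ) = z3 t • ((1:ℝ), (0:ℝ)) + z4 t • ((0:ℝ), (1:ℝ)) := by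
    simp
  have hquad : hessQuad J (z1 t, z2 t) (z3 t, z4 t)
      = z3 t * (H (z3 t, z4 t) (1, 0)) + z4 t * (H (z3 t, z4 t) (0, 1)) := by
    have : hessQuad J (z1 t, z2 t) (z3 t, z4 t) = H (z3 t, z4 t) (z3 t, z4 t) := rfl
    have key : ∀ (f : ℝ × ℝ →L[ℝ] ℝ) (a b : ℝ), f (a, b) = a * f (1, 0) + b * f (0, 1) := by
      intro f a b
      have hab : ((a, b) : ℝ × ℝ) = a • ((1:ℝ), (0:ℝ)) + b • ((0:ℝ), (1:ℝ)) := by simp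
      rw [hab, map_add, map_smul, map_smul, smul_eq_mul, smul_eq_mul]
    rw [this, key]
  have h1' : H (k1 * S * z3 t, k1 * S * z4 t) (1, 0)
      = (k1 * S) * H (z3 t, z4 t) (1, 0) := by
    rw [hsmul, map_smul]; simp
  have h2' : H (k1 * S * z3 t, k1 * S * z4 t) (0, 1)
      = (k1 * S) * H (z3 t, z4 t) (0, 1) := by
    rw [hsmul, map_smul]; simp
  rw [hquad, h1', h2']
  ring
end

section
/- Let J : ℝ² → ℝ be twice continuously differentiable and let t ↦ (z1(t), z2(t), z3(t), z4(t)) be a differentiable solution of the closed-loop system. If at some time t₀ one has z3(t₀)² + z4(t₀)² = 1, ∇J(z1(t₀), z2(t₀)) ≠ 0, and ⟨∇J(z1(t₀), z2(t₀)), (z3(t₀), z4(t₀))⟩ = 0, then the derivative of t ↦ ⟨∇J(z1(t), z2(t)), (z3(t), z4(t))⟩ at t₀ is nonzero. -/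
open Real Filter

/-- If at some time `t₀` the solution satisfies `z3² + z4² = 1`,
`∇J(z1,z2) ≠ 0` and `⟨∇J(z1,z2),(z3,z4)⟩ = 0`, then the derivative of
`t ↦ ⟨∇J(z1(t),z2(t)),(z3(t),z4(t))⟩` at `t₀` is nonzero. -/
theorem stmt6 (J : ℝ × ℝ → ℝ) (hJ : ContDiff ℝ 2 J)
    (k1 k2 : ℝ) (hk1 : 0 < k1) (hk2 : 0 < k2)
    (z1 z2 z3 z4 : ℝ → ℝ)
    (hsol : ClosedLoop J k1 k2 z1 z2 z3 z4 Set.univ)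
    (t0 : ℝ)
    (hcircle : z3 t0 ^ 2 + z4 t0 ^ 2 = 1)
    (hgrad : (gradJ1 J (z1 t0, z2 t0), gradJ2 J (z1 t0, z2 t0)) ≠ ((0 : ℝ), (0 : ℝ)))
    (hperp : gradJ1 J (z1 t0, z2 t0) * z3 t0 + gradJ2 J (z1 t0, z2 t0) * z4 t0 = 0) :
    deriv (fun s => gradJ1 J (z1 s, z2 s) * z3 s + gradJ2 J (z1 s, z2 s) * z4 s) t0 ≠ 0 := by
  obtain ⟨h1, h2, h3, h4⟩ := hsol t0 trivial
  rw [hperp] at h1 h2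
  simp only [mul_zero, zero_mul] at h1 h2
  -- the curve (z1, z2) has derivative 0 at t0
  have hcurve : HasDerivAt (fun t => (z1 t, z2 t)) ((0 : ℝ × ℝ)) t0 := HasDerivAt.prodMk h1 h2
  -- fderiv of J is C¹
  have hfd : ContDiff ℝ 1 (fun p => fderiv ℝ J p) := hJ.fderiv_right (le_refl _)
  have hg1 : ContDiff ℝ 1 (fun p => gradJ1 J p) := by
    have := (ContinuousLinearMap.apply ℝ ℝ ((1 : ℝ), (0 : ℝ))).contDiff.comp hfd
    exact this
  have hg2 : ContDiff ℝ 1 (fun p => gradJ2 J p) := by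
    have := (ContinuousLinearMap.apply ℝ ℝ ((0 : ℝ), (1 : ℝ))).contDiff.comp hfd
    exact this
  have hd1 : HasDerivAt (fun t => gradJ1 J (z1 t, z2 t)) 0 t0 := by
    have := ((hg1.differentiable one_ne_zero) (z1 t0, z2 t0)).hasFDerivAt.comp_hasDerivAt t0 hcurve
    simpa [Function.comp_def] using this
  have hd2 : HasDerivAt (fun t => gradJ2 J (z1 t, z2 t)) 0 t0 := by
    have := ((hg2.differentiable one_ne_zero) (z1 t0, z2 t0)).hasFDerivAt.comp_hasDerivAt t0 hcurve
    simpa [Function.comp_def] using this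
  set a := gradJ1 J (z1 t0, z2 t0) with ha
  set b := gradJ2 J (z1 t0, z2 t0) with hb
  set c := z3 t0 with hc
  set d := z4 t0 with hd
  have hf : HasDerivAt (fun s => gradJ1 J (z1 s, z2 s) * z3 s + gradJ2 J (z1 s, z2 s) * z4 s)
      (0 * c + a * (k2 * (b * c - a * d) * d) +
        (0 * d + b * (-(k2 * (b * c - a * d)) * c))) t0 :=
    (hd1.mul h3).add (hd2.mul h4)
  rw [hf.deriv]
  have hab : a ≠ 0 ∨ b ≠ 0 := by
    by_contra h
    push_neg at h
    exact hgrad (by simp [← ha, ← hb, h.1, h.2])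
  have habpos : 0 < a ^ 2 + b ^ 2 := by
    rcases hab with h | h
    · positivity
    · positivity
  have key : (b * c - a * d) ^ 2 = a ^ 2 + b ^ 2 := by nlinarith [hperp, hcircle]
  have : 0 * c + a * (k2 * (b * c - a * d) * d) + (0 * d + b * (-(k2 * (b * c - a * d)) * c))
      = -k2 * (b * c - a * d) ^ 2 := by ring
  rw [this, key]
  nlinarith
end

section
/- Let J : ℝ² → ℝ be twice continuously differentiable and strictly concave on ℝ² with global maximum at p* = (z1*, z2*). If t ↦ (z1(t), z2(t), z3(t), z4(t)) is a differentiable solution of the closed-loop system defined for all t ≥ 0 with z3(0)² + z4(0)² = 1 and such that ⟨∇J(z1(t), z2(t)), (z3(t), z4(t))⟩ = 0 for all t ≥ 0, then (z1(t), z2(t)) = (z1*, z2*) for all t ≥ 0. -/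
open Real Filter

/-- For strictly concave `J` with global maximum at `pstar`, if a solution of
the closed-loop system on `[0,∞)` starts on the unit circle in `(z3, z4)` and satisfies
`⟨∇J(z1,z2),(z3,z4)⟩ = 0` for all `t ≥ 0`, then `(z1(t), z2(t)) = pstar` for all `t ≥ 0`. -/
theorem stmt7 (J : ℝ × ℝ → ℝ) (hJ : ContDiff ℝ 2 J)
    (hconc : StrictConcaveOn ℝ Set.univ J)
    (pstar : ℝ × ℝ) (hmax : ∀ p : ℝ × ℝ, J p ≤ J pstar)
    (k1 k2 : ℝ) (hk1 : 0 < k1) (hk2 : 0 < k2)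
    (z1 z2 z3 z4 : ℝ → ℝ)
    (hsol : ClosedLoop J k1 k2 z1 z2 z3 z4 (Set.Ici 0))
    (hinit : z3 0 ^ 2 + z4 0 ^ 2 = 1)
    (hperp : ∀ t ≥ (0 : ℝ),
      gradJ1 J (z1 t, z2 t) * z3 t + gradJ2 J (z1 t, z2 t) * z4 t = 0) :
    ∀ t ≥ (0 : ℝ), (z1 t, z2 t) = pstar := by
  -- helper: a function with zero derivative on [0,∞) is constant there
  have hconst : ∀ (f : ℝ → ℝ), (∀ t ≥ (0:ℝ), HasDerivAt f 0 t) →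
      ∀ t ≥ (0:ℝ), f t = f 0 := by
    intro f hf t ht
    refine constant_of_has_deriv_right_zero (f := f) (a := 0) (b := t) ?_ ?_ t ⟨ht, le_refl t⟩
    · intro x hx
      exact ((hf x hx.1).continuousAt).continuousWithinAt
    · intro x hx
      exact (hf x hx.1).hasDerivWithinAt
  -- z1, z2 are constant
  have hz1 : ∀ t ≥ (0:ℝ), z1 t = z1 0 := by
    refine hconst z1 (fun t ht => ?_)
    have h := (hsol t ht).1
    rw [hperp t ht] at h
    simpa using h
  have hz2 : ∀ t ≥ (0:ℝ), z2 t = z2 0 := by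
    refine hconst z2 (fun t ht => ?_)
    have h := (hsol t ht).2.1
    rw [hperp t ht] at h
    simpa using h
  -- z3² + z4² is constant = 1
  have hnorm : ∀ t ≥ (0:ℝ), z3 t ^ 2 + z4 t ^ 2 = 1 := by
    intro t ht
    rw [← hinit]
    refine hconst (fun t => z3 t ^ 2 + z4 t ^ 2) (fun t ht => ?_) t ht
    have h3 := (hsol t ht).2.2.1
    have h4 := (hsol t ht).2.2.2
    have : HasDerivAt (fun t => z3 t ^ 2 + z4 t ^ 2) _ t := (h3.pow 2).add (h4.pow 2)
    convert this using 1
    ring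
  set a : ℝ := gradJ1 J (z1 0, z2 0) with ha_def
  set b : ℝ := gradJ2 J (z1 0, z2 0) with hb_def
  have hgrad1 : ∀ t ≥ (0:ℝ), gradJ1 J (z1 t, z2 t) = a := by
    intro t ht; rw [hz1 t ht, hz2 t ht]
  have hgrad2 : ∀ t ≥ (0:ℝ), gradJ2 J (z1 t, z2 t) = b := by
    intro t ht; rw [hz1 t ht, hz2 t ht]
  set φ : ℝ → ℝ := fun t => a * z3 t + b * z4 t with hφ_def
  have hφ0 : ∀ t ≥ (0:ℝ), φ t = 0 := by
    intro t ht
    have := hperp t ht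
    rw [hgrad1 t ht, hgrad2 t ht] at this
    simp only [hφ_def]
    linarith [this]
  -- the perpendicular inner product also vanishes
  have hw : ∀ t ≥ (0:ℝ), b * z3 t - a * z4 t = 0 := by
    intro t ht
    have h3 := (hsol t ht).2.2.1
    have h4 := (hsol t ht).2.2.2
    rw [hgrad1 t ht, hgrad2 t ht] at h3 h4
    have hder : HasDerivAt φ
        (a * (k2 * (b * z3 t - a * z4 t) * z4 t) +
          b * (-(k2 * (b * z3 t - a * z4 t)) * z3 t)) t :=
      ((h3.const_mul a).add (h4.const_mul b))
    have h1 : HasDerivWithinAt φ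
        (a * (k2 * (b * z3 t - a * z4 t) * z4 t) +
          b * (-(k2 * (b * z3 t - a * z4 t)) * z3 t)) (Set.Ici t) t :=
      hder.hasDerivWithinAt
    have h2 : HasDerivWithinAt φ 0 (Set.Ici t) t := by
      refine (hasDerivWithinAt_const t (Set.Ici t) (0:ℝ)).congr ?_ (hφ0 t ht)
      intro y hy
      exact hφ0 y (le_trans ht hy)
    have hu := uniqueDiffOn_Ici t t Set.self_mem_Ici
    have heq := (h1.derivWithin hu).symm.trans (h2.derivWithin hu)
    have hsq : k2 * (b * z3 t - a * z4 t) ^ 2 = 0 := by nlinarith [heq]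
    have : (b * z3 t - a * z4 t) ^ 2 = 0 := by
      rcases mul_eq_zero.1 hsq with h | h
      · exact absurd h (ne_of_gt hk2)
      · exact h
    exact pow_eq_zero_iff (n := 2) (by norm_num) |>.1 this
  -- the gradient vanishes at (z1 0, z2 0)
  have he1 : a * z3 0 + b * z4 0 = 0 := hφ0 0 le_rfl
  have he2 : b * z3 0 - a * z4 0 = 0 := hw 0 le_rfl
  have ha0 : a = 0 := by linear_combination z3 0 * he1 - z4 0 * he2 - a * hinit
  have hb0 : b = 0 := by linear_combination z4 0 * he1 + z3 0 * he2 - b * hinit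
  set p0 : ℝ × ℝ := (z1 0, z2 0) with hp0_def
  have hfder : ∀ v : ℝ × ℝ, fderiv ℝ J p0 v = 0 := by
    intro v
    have hv : v = v.1 • ((1:ℝ), (0:ℝ)) + v.2 • ((0:ℝ), (1:ℝ)) := by
      simp [Prod.ext_iff]
    rw [hv, map_add, map_smul, map_smul]
    have h1 : fderiv ℝ J p0 (1, 0) = a := rfl
    have h2 : fderiv ℝ J p0 (0, 1) = b := rfl
    rw [h1, h2, ha0, hb0]
    simp
  -- p0 = pstar
  have hJdiff : Differentiable ℝ J := hJ.differentiable (by norm_num)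
  -- concavity + zero gradient ⇒ J pstar ≤ J p0
  have hle : J pstar ≤ J p0 := by
    set v : ℝ × ℝ := pstar - p0 with hv_def
    set f : ℝ → ℝ := fun s => J (p0 + s • v) with hf_def
    have hline : HasDerivAt (fun s : ℝ => p0 + s • v) v 0 := by
      have := ((hasDerivAt_id (0:ℝ)).smul_const v).const_add p0
      simpa using this
    have hf0 : HasDerivAt f (fderiv ℝ J (p0 + (0:ℝ) • v) v) 0 := by
      have hJ' := (hJdiff (p0 + (0:ℝ) • v)).hasFDerivAt
      exact hJ'.comp_hasDerivAt 0 hline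
    have hfd : HasDerivAt f 0 0 := by
      have : p0 + (0:ℝ) • v = p0 := by simp
      rw [this] at hf0
      rwa [hfder v] at hf0
    have htend : Filter.Tendsto (slope f 0) (nhdsWithin 0 (Set.Ioi 0)) (nhds 0) := by
      have := hasDerivAt_iff_tendsto_slope.1 hfd
      exact this.mono_left (nhdsWithin_mono 0 (fun x hx => ne_of_gt hx))
    have hev : ∀ᶠ s in nhdsWithin (0:ℝ) (Set.Ioi 0), J pstar - J p0 ≤ slope f 0 s := by
      filter_upwards [Ioo_mem_nhdsGT_of_mem (Set.mem_Ico.2 ⟨le_rfl, (zero_lt_one)⟩)]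
      intro s hs
      obtain ⟨hs0, hs1⟩ := hs
      have hcon := hconc.concaveOn.2 (Set.mem_univ p0) (Set.mem_univ pstar)
        (by linarith : (0:ℝ) ≤ 1 - s) (le_of_lt hs0) (by ring)
      have hseg : (1 - s) • p0 + s • pstar = p0 + s • v := by
        simp only [hv_def, smul_sub, sub_smul, one_smul]
        abel
      rw [hseg] at hcon
      have hfs : (1 - s) * J p0 + s * J pstar ≤ f s := hcon
      have hf00 : f 0 = J p0 := by simp [hf_def]
      rw [slope_def_field]
      rw [hf00, sub_zero, le_div_iff₀ hs0]
      nlinarith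
    linarith [ge_of_tendsto htend hev]
  have hJeq : J p0 = J pstar := le_antisymm (hmax p0) hle
  have hp0 : p0 = pstar := by
    by_contra hne
    have := hconc.2 (Set.mem_univ p0) (Set.mem_univ pstar) hne
      (by norm_num : (0:ℝ) < 1/2) (by norm_num : (0:ℝ) < 1/2) (by norm_num)
    have hmid := hmax ((1/2 : ℝ) • p0 + (1/2 : ℝ) • pstar)
    rw [hJeq] at this
    have : J pstar < J ((1/2:ℝ) • p0 + (1/2:ℝ) • pstar) := by
      calc J pstar = (1/2:ℝ) * J pstar + (1/2:ℝ) * J pstar := by ring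
        _ < _ := this
    linarith
  intro t ht
  rw [hz1 t ht, hz2 t ht]
  exact hp0
end
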